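/- Let Σ be an ordered alphabet of size σ ≥ 2, let k ≥ 2, and let w_lin be the linearization of (a rotation of) a σ-ary de Bruijn sequence of order k. Then the ratio between the size χ of a smallest suffixient set of w_lin $ and the number r of runs in BWT(w_lin $) satisfies χ/r ≤ (σ^k + 1)/(σ^{k-1}(σ − 1) + 1) < σ/(σ − 1). In particular, for σ ≥ 3 linearized and terminated de Bruijn sequences never reach ratio 3/2, so they cannot approach the bound χ ≤ 2r. -/

import Mathlib

/-- The Burrows–Wheeler transform of `w`: last characters of all cyclic
rotations of `w`, listed in lexicographic order of the rotations. -/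
def bwtL {α : Type*} [LinearOrder α] (w : List α) : List α :=
  (List.insertionSort (· ≤ ·)
    ((List.range w.length).map (fun i => w.rotate i))).filterMap List.getLast?

/-- Number of runs (maximal equal-letter substrings) of a string. -/
def runsCount {α : Type*} [DecidableEq α] (l : List α) : ℕ :=
  (l.destutter (· ≠ ·)).length

/-- Terminate a string with the sentinel `⊥ = $`, smaller than every symbol. -/
def term {α : Type*} (w : List α) : List (WithBot α) :=
  w.map (fun a => (a : WithBot α)) ++ [⊥]

/-- `y` is a right-extension of `v`: `y = x ++ [a]` occurs in `v` where `x`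
is right-maximal (some `x ++ [b]` with `b ≠ a` also occurs in `v`). -/
def RightExt {α : Type*} (v y : List α) : Prop :=
  ∃ x a b, y = x ++ [a] ∧ a ≠ b ∧ (x ++ [a]) <:+: v ∧ (x ++ [b]) <:+: v

/-- `y` is a super-maximal extension of `v`: a right-extension that is not a
proper suffix of any other right-extension. -/
def SuperMax {α : Type*} (v y : List α) : Prop :=
  RightExt v y ∧ ∀ z, RightExt v z → y <:+ z → z = y

/-- Number of super-maximal extensions of `v`. -/
noncomputable def sre {α : Type*} (v : List α) : ℕ :=
  Set.ncard {y | SuperMax v y}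

/-- χ(w): the size of a smallest suffixient set of `w$`, which equals the
number of super-maximal extensions of `w$`. -/
noncomputable def chi {α : Type*} (w : List α) : ℕ :=
  sre (term w)

/-- A de Bruijn sequence of order `k` over a finite alphabet `α`: a cyclic
word of length `(card α)^k` in which every word of length `k` occurs exactly
once as a cyclic length-`k` window. -/
def IsDeBruijn {α : Type*} [Fintype α] (k : ℕ) (C : List α) : Prop :=
  C.length = Fintype.card α ^ k ∧
  ∀ x : List α, x.length = k → ∃! i, i < C.length ∧ x = (C.rotate i).take k

/-- The linearization of a rotation `U` of a de Bruijn cycle of order `k`: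
append the first `k − 1` characters of `U` at the end. -/
def linz {α : Type*} (k : ℕ) (U : List α) : List α :=
  U ++ U.take (k - 1)

private lemma term_eq {α : Type*} (w : List α) : term w = w.map WithBot.some ++ [⊥] := by
  simp only [term]
  congr 1
  induction w with
  | nil => rfl
  | cons a t ih => simpa using ih

section Helpers
open List


variable {β γ : Type*} [DecidableEq β] [DecidableEq γ]

lemma card_le_destutter' (l : List β) : ∀ a : β,
    (a :: l).toFinset.card ≤ (List.destutter' (· ≠ ·) a l).length := by
  induction l with
  | nil => intro a; simp [List.destutter'_nil]
  | cons b t ih =>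
    intro a
    rw [List.destutter'_cons]
    by_cases h : a = b
    · subst h
      rw [if_neg (by simp)]
      calc (a :: a :: t).toFinset.card = (a :: t).toFinset.card := by simp
        _ ≤ _ := ih a
    · rw [if_pos (by exact h)]
      simp only [List.length_cons]
      calc (a :: b :: t).toFinset.card ≤ (b :: t).toFinset.card + 1 := by
            simp only [List.toFinset_cons]
            exact Finset.card_insert_le _ _
        _ ≤ _ := by have := ih b; omega

lemma card_le_destutter (l : List β) :
    l.toFinset.card ≤ (l.destutter (· ≠ ·)).length := by
  cases l with
  | nil => simp
  | cons a t => rw [List.destutter_cons']; exact card_le_destutter' t a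

lemma destutter_le_card [LinearOrder β] (l : List β) (h : l.Pairwise (· ≤ ·)) :
    (l.destutter (· ≠ ·)).length ≤ l.toFinset.card := by
  have hsub : l.destutter (· ≠ ·) <+ l := List.destutter_sublist _ l
  have hsorted : (l.destutter (· ≠ ·)).Pairwise (· ≤ ·) := h.sublist hsub
  have hchain : (l.destutter (· ≠ ·)).IsChain (· ≠ ·) := List.isChain_destutter _ l
  have hlt : (l.destutter (· ≠ ·)).IsChain (· < ·) := by
    have h2 := hsorted.isChain
    revert hchain h2
    generalize l.destutter (· ≠ ·) = m
    intro h1 h2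
    induction m with
    | nil => simp
    | cons a t ih =>
      cases t with
      | nil => simp
      | cons b s =>
        rw [List.isChain_cons_cons] at *
        exact ⟨lt_of_le_of_ne h2.1 h1.1, ih h1.2 h2.2⟩
  have hnd : (l.destutter (· ≠ ·)).Nodup := by
    have := (List.isChain_iff_pairwise.mp hlt)
    exact this.imp ne_of_lt
  calc (l.destutter (· ≠ ·)).length = (l.destutter (· ≠ ·)).toFinset.card :=
        (List.toFinset_card_of_nodup hnd).symm
    _ ≤ l.toFinset.card := Finset.card_le_card (fun x hx => by
        simp only [List.mem_toFinset] at *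
        exact hsub.mem hx)

lemma destutter'_drop_head (t : List β) (a b : β) :
    (List.destutter' (· ≠ ·) b t).length ≤ (List.destutter' (· ≠ ·) a (b :: t)).length := by
  rw [List.destutter'_cons]
  by_cases h : a = b
  · subst h; rw [if_neg (by simp)]
  · rw [if_pos (by exact h)]; simp

lemma pair_destutter' (l : List (β × γ)) : ∀ p : β × γ,
    (List.destutter' (· ≠ ·) p l).length + 1 ≤
      (List.destutter' (· ≠ ·) p.1 (l.map Prod.fst)).length +
      (List.destutter' (· ≠ ·) p.2 (l.map Prod.snd)).length := by
  induction l with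
  | nil => intro p; simp [List.destutter'_nil]
  | cons q t ih =>
    intro p
    rw [List.map_cons, List.map_cons, List.destutter'_cons]
    by_cases h : p = q
    · subst h
      rw [if_neg (by simp), List.destutter'_cons, List.destutter'_cons,
        if_neg (by simp), if_neg (by simp)]
      exact ih p
    · rw [if_pos (by exact h)]
      have hih := ih q
      have h1 : (List.destutter' (· ≠ ·) q.1 (t.map Prod.fst)).length ≤
          (List.destutter' (· ≠ ·) p.1 (q.1 :: t.map Prod.fst)).length :=
        destutter'_drop_head _ _ _
      have h2 : (List.destutter' (· ≠ ·) q.2 (t.map Prod.snd)).length ≤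
          (List.destutter' (· ≠ ·) p.2 (q.2 :: t.map Prod.snd)).length :=
        destutter'_drop_head _ _ _
      have hone : (List.destutter' (· ≠ ·) q.1 (t.map Prod.fst)).length + 1 ≤
            (List.destutter' (· ≠ ·) p.1 (q.1 :: t.map Prod.fst)).length ∨
          (List.destutter' (· ≠ ·) q.2 (t.map Prod.snd)).length + 1 ≤
            (List.destutter' (· ≠ ·) p.2 (q.2 :: t.map Prod.snd)).length := by
        have hne : p.1 ≠ q.1 ∨ p.2 ≠ q.2 := by
          by_contra hc; push_neg at hc; exact h (Prod.ext hc.1 hc.2)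
        rcases hne with hne | hne
        · left; rw [List.destutter'_cons, if_pos (by exact hne)]; simp
        · right; rw [List.destutter'_cons, if_pos (by exact hne)]; simp
      simp only [List.length_cons]
      rcases hone with hone | hone <;> omega

lemma pair_destutter (l : List (β × γ)) (h : l ≠ []) :
    (l.destutter (· ≠ ·)).length + 1 ≤
      ((l.map Prod.fst).destutter (· ≠ ·)).length +
      ((l.map Prod.snd).destutter (· ≠ ·)).length := by
  cases l with
  | nil => exact absurd rfl h
  | cons p t =>
    rw [List.map_cons, List.map_cons, List.destutter_cons', List.destutter_cons',
      List.destutter_cons']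
    exact pair_destutter' t p

variable {β : Type*} [LinearOrder β]

lemma lex_of_take_lex : ∀ (x : List β) (y : List β) (m : ℕ),
    List.Lex (· < ·) (x.take m) (y.take m) → List.Lex (· < ·) x y := by
  intro x
  induction x with
  | nil =>
    intro y m h
    cases y with
    | nil => simp at h
    | cons b t => exact List.Lex.nil
  | cons a x ih =>
    intro y m h
    cases y with
    | nil => simp at h
    | cons b t =>
      cases m with
      | zero => simp at h
      | succ n =>
        simp only [List.take_succ_cons] at h
        cases h with
        | cons h => exact List.Lex.cons (ih t n h)
        | rel h => exact List.Lex.rel h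

lemma list_lt_iff_lex {x y : List β} : x < y ↔ List.Lex (· < ·) x y := Iff.rfl

lemma take_le_take {x y : List β} (m : ℕ) (h : x ≤ y) : x.take m ≤ y.take m := by
  by_contra hc
  push_neg at hc
  exact absurd (list_lt_iff_lex.mpr (lex_of_take_lex y x m (list_lt_iff_lex.mp hc)))
    (not_lt_of_ge h)

variable {α : Type*}

lemma bot_not_mem_coe (w : List α) : ⊥ ∉ w.map WithBot.some := by
  intro h
  obtain ⟨a, -, ha⟩ := List.mem_map.mp h
  exact WithBot.coe_ne_bot ha

lemma exists_uncoe {y : List (WithBot α)} (h : ⊥ ∉ y) : ∃ u : List α, y = u.map WithBot.some := by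
  induction y with
  | nil => exact ⟨[], rfl⟩
  | cons a t ih =>
    have ha : a ≠ ⊥ := fun hc => h (hc ▸ List.mem_cons_self)
    obtain ⟨a', ha'⟩ := WithBot.ne_bot_iff_exists.mp ha
    obtain ⟨u, hu⟩ := ih (fun hc => h (List.mem_cons_of_mem _ hc))
    exact ⟨a' :: u, by rw [List.map_cons, ← hu]; exact congrArg (· :: t) ha'.symm⟩

lemma window_infix (l : List α) (j t : ℕ) : (l.drop j).take t <:+: l :=
  ((List.take_prefix t _).isInfix).trans (List.drop_suffix j l).isInfix

/-- an occurrence of a ⊥-free block inside `w.map some ++ [⊥]` lies inside the `w` part -/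
lemma infix_split {w : List α} {s x t : List (WithBot α)}
    (hv : w.map WithBot.some ++ [⊥] = s ++ x ++ t) (hbot : ⊥ ∉ x) (hx : x ≠ []) :
    s.length + x.length ≤ w.length ∧
      x = ((w.map WithBot.some).drop s.length).take x.length := by
  set v := w.map WithBot.some ++ [⊥] with hvdef
  have hvlen : v.length = w.length + 1 := by simp [hvdef]
  have hlen : s.length + x.length + t.length = w.length + 1 := by
    have := congrArg List.length hv
    simp only [List.length_append] at this
    omega
  have hxpos : 0 < x.length := List.length_pos_iff.mpr hx
  have hle : s.length + x.length ≤ w.length := by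
    by_contra hgt
    have ht : t = [] := List.length_eq_zero_iff.mp (by omega)
    have hsuf : x <:+ v := ⟨s, by rw [hv, ht, List.append_nil]⟩
    have hsufb : [⊥] <:+ v := ⟨w.map WithBot.some, rfl⟩
    rcases List.suffix_or_suffix_of_suffix hsufb hsuf with h | h
    · exact hbot (h.subset (List.mem_singleton_self _))
    · have hx1 : x.length ≤ 1 := by
        have := h.length_le
        simpa using this
      have : x = [⊥] := h.eq_of_length (by simp; omega)
      exact hbot (this ▸ List.mem_singleton_self _)
  refine ⟨hle, ?_⟩
  have hx1 : x ++ t = v.drop s.length := by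
    rw [hv, List.append_assoc, List.drop_left]
  have hx2 : x = (v.drop s.length).take x.length := by
    rw [← hx1, List.take_left]
  have h3 : (v.drop s.length).take x.length =
      ((w.map WithBot.some).drop s.length).take x.length := by
    rw [hvdef, List.drop_append_of_le_length (by simp; omega),
      List.take_append_of_le_length (by rw [List.length_drop]; simp; omega)]
  conv_lhs => rw [hx2]
  exact h3


variable {γ : Type*}

lemma window_eq (l : List γ) (k j : ℕ) (hk : k ≤ l.length) (hj : j < l.length) :
    ((l ++ l.take (k-1)).drop j).take k = (l.rotate j).take k := by
  rw [List.rotate_eq_drop_append_take (le_of_lt hj),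
    List.drop_append, List.take_append,
    List.take_append (l₁ := l.drop j)]
  have hdj : j - l.length = 0 := by omega
  rw [hdj, List.drop_zero, List.length_drop]
  congr 1
  rw [List.take_take, List.take_take]
  congr 1
  omega

-- windows of the linearization
lemma window_linz (C : List γ) (k c j : ℕ) (hk : k ≤ C.length) (hj : j < C.length) :
    ((linz k (C.rotate c)).drop j).take k = (C.rotate ((c+j) % C.length)).take k := by
  have hlen : (C.rotate c).length = C.length := List.length_rotate _ _
  have := window_eq (C.rotate c) k j (by rw [hlen]; exact hk) (by rw [hlen]; exact hj)
  rw [linz, this, List.rotate_rotate, ← List.rotate_mod]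

lemma window_exists {α : Type*} [Fintype α] (k : ℕ) (C : List α)
    (hC : C.length = Fintype.card α ^ k ∧
      ∀ x : List α, x.length = k → ∃! i, i < C.length ∧ x = (C.rotate i).take k)
    (c : ℕ) (hk : k ≤ C.length) (hm : 0 < C.length)
    (u : List α) (hu : u.length = k) :
    ∃ j < C.length, ((linz k (C.rotate c)).drop j).take k = u := by
  obtain ⟨i₀, ⟨hi₀, hwin⟩, -⟩ := hC.2 u hu
  set m := C.length with hmdef
  have hcm : c % m < m := Nat.mod_lt _ hm
  set j := if c % m ≤ i₀ then i₀ - c % m else i₀ + m - c % m with hj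
  have hjm : j < m := by
    by_cases h : c % m ≤ i₀ <;> simp [hj, h] <;> omega
  refine ⟨j, hjm, ?_⟩
  rw [window_linz C k c j hk hjm]
  have h1 : (c + j) % m = (c % m + j) % m := by rw [Nat.mod_add_mod]
  have h2 : c % m + j = i₀ ∨ c % m + j = i₀ + m := by
    by_cases h : c % m ≤ i₀ <;> simp [hj, h] <;> omega
  have h3 : (c + j) % m = i₀ := by
    rcases h2 with h2 | h2 <;> rw [h1, h2]
    · exact Nat.mod_eq_of_lt hi₀
    · rw [Nat.add_mod_right]; exact Nat.mod_eq_of_lt hi₀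
  rw [h3, ← hwin]

lemma window_unique {α : Type*} [Fintype α] (k : ℕ) (C : List α)
    (hC : C.length = Fintype.card α ^ k ∧
      ∀ x : List α, x.length = k → ∃! i, i < C.length ∧ x = (C.rotate i).take k)
    (c : ℕ) (hk : k ≤ C.length) (hm : 0 < C.length)
    (j₁ j₂ : ℕ) (h₁ : j₁ < C.length) (h₂ : j₂ < C.length)
    (heq : ((linz k (C.rotate c)).drop j₁).take k = ((linz k (C.rotate c)).drop j₂).take k) :
    j₁ = j₂ := by
  set m := C.length with hmdef
  rw [window_linz C k c j₁ hk h₁, window_linz C k c j₂ hk h₂] at heq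
  set u := (C.rotate ((c + j₁) % m)).take k with hu
  have hulen : u.length = k := by
    rw [hu, List.length_take, List.length_rotate]
    omega
  obtain ⟨i₀, -, huniq⟩ := hC.2 u hulen
  have e1 : (c + j₁) % m = i₀ := huniq _ ⟨Nat.mod_lt _ hm, rfl⟩
  have e2 : (c + j₂) % m = i₀ := huniq _ ⟨Nat.mod_lt _ hm, heq⟩
  have : (c + j₁) % m = (c + j₂) % m := by rw [e1, e2]
  have hmod : j₁ % m = j₂ % m := by
    have := Nat.ModEq.add_left_cancel' c this
    exact this
  rwa [Nat.mod_eq_of_lt h₁, Nat.mod_eq_of_lt h₂] at hmod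

end Helpers

section Pieces
open List
variable {α : Type*} [Fintype α] [LinearOrder α]

theorem sre_bound (σ k : ℕ) (hσ : 2 ≤ σ) (hcard : Fintype.card α = σ) (hk : 2 ≤ k)
    (C : List α)
    (hC : C.length = Fintype.card α ^ k ∧
      ∀ x : List α, x.length = k → ∃! i, i < C.length ∧ x = (C.rotate i).take k)
    (c : ℕ) :
    {y | SuperMax ((linz k (C.rotate c)).map WithBot.some ++ [⊥]) y}.ncard ≤ σ ^ k + 1 := by
  have hnea : Nonempty α := Fintype.card_pos_iff.mp (by omega)
  have hnta : Nontrivial α := Fintype.one_lt_card_iff_nontrivial.mp (by omega)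
  obtain ⟨a0⟩ := hnea
  set wlin := linz k (C.rotate c) with hwlin
  set w'' := wlin.map WithBot.some with hw''
  set v := w'' ++ [⊥] with hv
  set m := σ ^ k with hm
  have hCm : C.length = m := by rw [hC.1, hcard]
  have hm0 : 0 < m := by positivity
  have hkm : k ≤ m := by
    have h1 : k < 2 ^ k := Nat.lt_two_pow_self
    have h2 : 2 ^ k ≤ σ ^ k := Nat.pow_le_pow_left hσ k
    omega
  have hkC : k ≤ C.length := by omega
  have hC0 : 0 < C.length := by omega
  have hwlen : wlin.length = m + (k - 1) := by
    rw [hwlin, linz, List.length_append, List.length_take, List.length_rotate, hCm]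
    congr 1
    omega
  have hw''len : w''.length = m + (k - 1) := by rw [hw'', List.length_map, hwlen]
  -- every α-word of length ≤ k occurs in wlin
  have occ_any : ∀ u : List α, u.length ≤ k → u <:+: wlin := by
    intro u hu
    obtain ⟨j, hj, hwin⟩ := window_exists k C hC c hkC hC0
      (u ++ List.replicate (k - u.length) a0)
      (by rw [List.length_append, List.length_replicate]; omega)
    have h1 : u ++ List.replicate (k - u.length) a0 <:+: wlin := by
      rw [← hwin, ← hwlin]; exact window_infix wlin j k
    exact (List.prefix_append u _).isInfix.trans h1
  have occ_coe : ∀ u : List α, u <:+: wlin → u.map WithBot.some <:+: v := by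
    intro u hu
    exact (hu.map WithBot.some).trans (List.prefix_append w'' [⊥]).isInfix
  -- positions of bot-free infixes of v are unique if long enough
  have pos_unique : ∀ (x : List (WithBot α)) (s₁ t₁ s₂ t₂ : List (WithBot α)), ⊥ ∉ x →
      k ≤ x.length → s₁ ++ x ++ t₁ = v → s₂ ++ x ++ t₂ = v → s₁.length = s₂.length := by
    intro x s₁ t₁ s₂ t₂ hbot hxk h1 h2
    have hx : x ≠ [] := by intro hc; rw [hc] at hxk; simp at hxk; omega
    obtain ⟨hle1, he1⟩ := infix_split (w := wlin) (by rw [← hv, ← h1]) hbot hx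
    obtain ⟨hle2, he2⟩ := infix_split (w := wlin) (by rw [← hv, ← h2]) hbot hx
    rw [hwlen] at hle1 hle2
    have hj1 : s₁.length < m := by omega
    have hj2 : s₂.length < m := by omega
    -- the k-prefix of x is a window of wlin at both positions
    have hq1 : x.take k = ((w''.drop s₁.length).take x.length).take k := by rw [← he1]
    have hq2 : x.take k = ((w''.drop s₂.length).take x.length).take k := by rw [← he2]
    rw [List.take_take, min_eq_left hxk] at hq1 hq2
    have hcoetake : ∀ j : ℕ, (w''.drop j).take k = ((wlin.drop j).take k).map WithBot.some := by
      intro j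
      rw [hw'', ← List.map_drop, ← List.map_take]
    rw [hcoetake] at hq1 hq2
    have heq : ((wlin.drop s₁.length).take k).map WithBot.some
        = ((wlin.drop s₂.length).take k).map WithBot.some := by rw [← hq1, ← hq2]
    have heq' : (wlin.drop s₁.length).take k = (wlin.drop s₂.length).take k :=
      (List.map_injective_iff.mpr WithBot.coe_injective) heq
    exact window_unique k C hC c hkC hC0 s₁.length s₂.length
      (by omega) (by omega) heq'
  -- the main inclusion
  set S1 : Set (List (WithBot α)) := {y | SuperMax v y ∧ y <:+ v} with hS1def
  set S2 : Set (List (WithBot α)) :=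
    (fun j => ((wlin.drop j).take k).map WithBot.some) '' ↑(Finset.range m) with hS2def
  have hsub : {y | SuperMax v y} ⊆ S1 ∪ S2 := by
    rintro y hy
    obtain ⟨⟨x, a, b, hyx, hab, hxa, hxb⟩, hmax⟩ := hy
    by_cases hboty : ⊥ ∈ y
    · -- y is a suffix of v
      left
      refine ⟨⟨⟨x, a, b, hyx, hab, hxa, hxb⟩, hmax⟩, ?_⟩
      have hyinf : y <:+: v := by rw [hyx]; exact hxa
      obtain ⟨s, t, hst⟩ := hyinf
      have ht : t = [] := by
        by_contra htne
        have hlv : (s ++ y).length ≤ w''.length := by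
          have := congrArg List.length hst
          simp only [List.length_append, hv] at this ⊢
          have : s.length + y.length + t.length = w''.length + 1 := by
            simp at this ⊢; omega
          have htpos : 0 < t.length := List.length_pos_iff.mpr htne
          omega
        have hpre : s ++ y <+: v := ⟨t, hst⟩
        have : s ++ y <+: w'' := by
          have h1 : s ++ y = v.take (s ++ y).length := List.prefix_iff_eq_take.mp hpre
          rw [hv, List.take_append_of_le_length hlv] at h1
          rw [h1]
          exact List.take_prefix _ _
        exact bot_not_mem_coe wlin (by
          rw [← hw'']
          exact this.subset (List.mem_append_right s hboty))
      rw [ht, List.append_nil] at hst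
      exact ⟨s, hst⟩
    · -- y is a window of length k
      right
      have hbotx : ⊥ ∉ x := fun hc => hboty (hyx ▸ List.mem_append_left [a] hc)
      have hbota : a ≠ ⊥ := by
        intro hc
        exact hboty (hyx ▸ List.mem_append_right x (hc ▸ List.mem_singleton_self a))
      obtain ⟨a2, ha2⟩ := WithBot.ne_bot_iff_exists.mp hbota
      obtain ⟨ux, hux⟩ := exists_uncoe hbotx
      -- step 1 : x.length ≤ k - 1
      have step1 : x.length ≤ k - 1 := by
        by_contra hxk
        push_neg at hxk
        have hxk' : k ≤ x.length := by omega
        obtain ⟨s₁, t₁, h1⟩ := hxa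
        obtain ⟨s₂, t₂, h2⟩ := hxb
        have h1' : s₁ ++ x ++ ([a] ++ t₁) = v := by rw [← h1]; simp [List.append_assoc]
        have h2' : s₂ ++ x ++ ([b] ++ t₂) = v := by rw [← h2]; simp [List.append_assoc]
        have hs12 : s₁.length = s₂.length :=
          pos_unique x s₁ ([a] ++ t₁) s₂ ([b] ++ t₂) hbotx hxk' h1' h2'
        have hseq : s₁ = s₂ := by
          have e1 : s₁ = v.take s₁.length := List.prefix_iff_eq_take.mp
            ⟨x ++ ([a] ++ t₁), by rw [← List.append_assoc, h1']⟩
          have e2 : s₂ = v.take s₂.length := List.prefix_iff_eq_take.mp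
            ⟨x ++ ([b] ++ t₂), by rw [← List.append_assoc, h2']⟩
          rw [e1, e2, hs12]
        rw [← hseq] at h2'
        have : [a] ++ t₁ = [b] ++ t₂ := List.append_cancel_left (h1'.trans h2'.symm)
        have : a = b := by simpa using congrArg (·.head?) this
        exact hab this
      -- step 2 : x.length = k - 1
      have step2 : x.length = k - 1 := by
        by_contra hne
        have hxlt : x.length < k - 1 := by omega
        obtain ⟨b2, hb2⟩ := exists_ne a2
        have huxlen : ux.length = x.length := by
          rw [hux, List.length_map]
        have hz1 : ((a0 :: ux) ++ [a2]).length ≤ k := by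
          simp [huxlen]; omega
        have hz2 : ((a0 :: ux) ++ [b2]).length ≤ k := by
          simp [huxlen]; omega
        have e1 : ((a0 :: ux) ++ [a2]).map WithBot.some <:+: v :=
          occ_coe _ (occ_any _ hz1)
        have e2 : ((a0 :: ux) ++ [b2]).map WithBot.some <:+: v :=
          occ_coe _ (occ_any _ hz2)
        have hmap1 : ((a0 :: ux) ++ [a2]).map WithBot.some
            = (WithBot.some a0 :: x) ++ [a] := by
          simp [hux, ← ha2]
        have hmap2 : ((a0 :: ux) ++ [b2]).map WithBot.some
            = (WithBot.some a0 :: x) ++ [WithBot.some b2] := by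
          simp [hux]
        have hzre : RightExt v (WithBot.some a0 :: y) := by
          refine ⟨WithBot.some a0 :: x, a, WithBot.some b2, by rw [hyx]; rfl, ?_, ?_, ?_⟩
          · rw [← ha2]
            intro hc
            exact hb2 (WithBot.coe_injective hc).symm
          · rw [← hmap1]; exact e1
          · rw [← hmap2]; exact e2
        have := hmax _ hzre (List.suffix_cons _ y)
        have : y.length + 1 = y.length := by
          conv_rhs => rw [← this]
          simp
        omega
      -- conclude : y is a k-window
      have hylen : y.length = k := by
        rw [hyx]; simp [step2]; omega
      have hyinf : y <:+: v := by rw [hyx]; exact hxa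
      obtain ⟨s, t, hst⟩ := hyinf
      have hyne : y ≠ [] := by
        intro hc; rw [hc] at hylen; simp at hylen; omega
      obtain ⟨hle, he⟩ := infix_split (w := wlin) (by rw [← hv, ← hst]) hboty hyne
      rw [hwlen, hylen] at hle
      refine ⟨s.length, by simp only [Finset.coe_range, Set.mem_Iio]; omega, ?_⟩
      show ((wlin.drop s.length).take k).map WithBot.some = y
      rw [he, hylen, List.map_take, List.map_drop]
  -- counting
  have hS1sub : S1.Subsingleton := by
    rintro y ⟨hy, hysuf⟩ z ⟨hz, hzsuf⟩
    rcases List.suffix_or_suffix_of_suffix hysuf hzsuf with h | h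
    · exact (hy.2 z hz.1 h).symm
    · exact hz.2 y hy.1 h
  have hS2fin : S2.Finite := (Finset.range m).finite_toSet.image _
  have hS1fin : S1.Finite := hS1sub.finite
  calc {y | SuperMax v y}.ncard ≤ (S1 ∪ S2).ncard :=
        Set.ncard_le_ncard hsub (hS1fin.union hS2fin)
    _ ≤ S1.ncard + S2.ncard := Set.ncard_union_le S1 S2
    _ ≤ 1 + m := by
        have hc1 : S1.ncard ≤ 1 :=
          (Set.ncard_le_one hS1fin).mpr (fun a ha b hb => hS1sub ha hb)
        have hc2 : S2.ncard ≤ m := by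
          have h3 : S2.ncard ≤ (↑(Finset.range m) : Set ℕ).ncard :=
            Set.ncard_image_le ((Finset.range m).finite_toSet)
          rwa [Set.ncard_coe_finset, Finset.card_range] at h3
        omega
    _ = m + 1 := Nat.add_comm 1 m

theorem runs_bound {α : Type*} [Fintype α] [LinearOrder α]
    (σ k : ℕ) (hσ : 2 ≤ σ) (hcard : Fintype.card α = σ) (hk : 2 ≤ k)
    (C : List α)
    (hC : C.length = Fintype.card α ^ k ∧
      ∀ x : List α, x.length = k → ∃! i, i < C.length ∧ x = (C.rotate i).take k)
    (c : ℕ) :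
    σ ^ (k-1) * (σ - 1) + 1 ≤
      ((List.insertionSort (· ≤ ·)
        ((List.range ((linz k (C.rotate c)).map WithBot.some ++ [⊥]).length).map
          (fun i => ((linz k (C.rotate c)).map WithBot.some ++ [⊥]).rotate i))).filterMap
            List.getLast? |>.destutter (· ≠ ·)).length := by
  classical
  set wlin := linz k (C.rotate c) with hwlin
  set w'' := wlin.map WithBot.some with hw''
  set v : List (WithBot α) := w'' ++ [⊥] with hv
  set m := σ ^ k with hm
  have hCm : C.length = m := by rw [hC.1, hcard]
  have hm0 : 0 < m := by positivity
  have hkm : k ≤ m := by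
    have h1 : k < 2 ^ k := Nat.lt_two_pow_self
    have h2 : 2 ^ k ≤ σ ^ k := Nat.pow_le_pow_left hσ k
    omega
  have hkC : k ≤ C.length := by omega
  have hC0 : 0 < C.length := by omega
  have hwlen : wlin.length = m + (k - 1) := by
    rw [hwlin, linz, List.length_append, List.length_take, List.length_rotate, hCm]
    congr 1
    omega
  have hw''len : w''.length = m + (k - 1) := by rw [hw'', List.length_map, hwlen]
  have hvlen : v.length = m + k := by rw [hv, List.length_append, hw''len]; simp; omega
  set N := v.length with hN
  set R := List.insertionSort (· ≤ ·) ((List.range N).map (fun i => v.rotate i)) with hR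
  have hperm : R ~ (List.range N).map (fun i => v.rotate i) := List.perm_insertionSort _ _
  have hmemR : ∀ ρ ∈ R, ∃ i < N, ρ = v.rotate i := by
    intro ρ hρ
    have := hperm.mem_iff.mp hρ
    obtain ⟨i, hi, hrot⟩ := List.mem_map.mp this
    exact ⟨i, List.mem_range.mp hi, hrot.symm⟩
  have hmemR' : ∀ i < N, v.rotate i ∈ R := by
    intro i hi
    exact hperm.mem_iff.mpr (List.mem_map.mpr ⟨i, List.mem_range.mpr hi, rfl⟩)
  have hRne : ∀ ρ ∈ R, ρ ≠ [] := by
    intro ρ hρ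
    obtain ⟨i, hi, hrot⟩ := hmemR ρ hρ
    intro hcon
    have := congrArg List.length hrot
    rw [hcon, List.length_rotate] at this
    simp [hN] at this
    omega
  have hsort : R.Pairwise (· ≤ ·) := List.pairwise_insertionSort _ _
  -- the value and key maps
  set val : List (WithBot α) → WithBot α := fun ρ => ρ.getLast?.getD ⊥ with hval
  set key : List (WithBot α) → List (WithBot α) := fun ρ => ρ.take (k-1) with hkey
  set V := R.map val with hV
  set K := R.map key with hK
  set M := R.map (fun ρ => (key ρ, val ρ)) with hM
  -- filterMap getLast? = V
  have hfm : R.filterMap List.getLast? = V := by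
    rw [hV]
    have : ∀ (L : List (List (WithBot α))), (∀ ρ ∈ L, ρ ≠ []) →
        L.filterMap List.getLast? = L.map val := by
      intro L
      induction L with
      | nil => intro _; rfl
      | cons ρ L ih =>
        intro hne
        have hρ : ρ ≠ [] := hne ρ List.mem_cons_self
        have hsome : ρ.getLast?.isSome := List.getLast?_isSome.mpr hρ
        obtain ⟨x, hx⟩ := Option.isSome_iff_exists.mp hsome
        rw [List.filterMap_cons, List.map_cons, hx]
        simp only [hval, hx, Option.getD_some]
        rw [ih (fun τ hτ => hne τ (List.mem_cons_of_mem _ hτ))]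
    exact this R hRne
  have hRne' : R ≠ [] := by
    intro hcon
    have := hperm.length_eq
    rw [hcon] at this
    simp [hN, hvlen] at this
    omega
  -- sortedness of keys
  have hKsort : K.Pairwise (· ≤ ·) := by
    rw [hK]
    exact List.Pairwise.map key (fun a b hab => take_le_take (k-1) hab) hsort
  -- counting distinct keys
  have hKfst : K = M.map Prod.fst := by rw [hK, hM, List.map_map]; rfl
  have hVsnd : V = M.map Prod.snd := by rw [hV, hM, List.map_map]; rfl
  have hMne : M ≠ [] := by
    rw [hM]
    intro hcon
    exact hRne' (List.map_eq_nil_iff.mp hcon)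
  -- main inequality chain
  have hchain : (M.destutter (· ≠ ·)).length + 1 ≤
      (K.destutter (· ≠ ·)).length + (V.destutter (· ≠ ·)).length := by
    rw [hKfst, hVsnd]
    exact pair_destutter M hMne
  have hMcard : M.toFinset.card ≤ (M.destutter (· ≠ ·)).length := card_le_destutter M
  have hKcard : (K.destutter (· ≠ ·)).length ≤ K.toFinset.card := destutter_le_card K hKsort
  -- Finset of all α-lists of a given length
  let Lset : ℕ → Finset (List α) := fun n => (Finset.univ : Finset (Fin n → α)).image List.ofFn
  have hLsetcard : ∀ n, (Lset n).card = σ ^ n := by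
    intro n
    rw [Finset.card_image_of_injective _ List.ofFn_injective, Finset.card_univ,
      Fintype.card_fun, Fintype.card_fin, hcard]
  have hLsetmem : ∀ (n : ℕ) (u : List α), u.length = n → u ∈ Lset n := by
    intro n u hu
    refine Finset.mem_image.mpr ⟨fun i : Fin n => u[(i : ℕ)]'(by omega), Finset.mem_univ _, ?_⟩
    apply List.ext_getElem
    · simp [hu]
    · intro i h1 h2
      simp [List.getElem_ofFn]
  -- every key has length k - 1
  have hkeylen : ∀ ρ ∈ R, (key ρ).length = k - 1 := by
    intro ρ hρ
    obtain ⟨i, hi, hrot⟩ := hmemR ρ hρ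
    rw [hkey]
    simp only
    rw [List.length_take, hrot, List.length_rotate]
    rw [← hN] at *
    omega
  -- A : the sigma^k canonical (key, val) pairs
  set Φ : List α × α → List (WithBot α) × WithBot α :=
    fun pc => (pc.1.map WithBot.some, WithBot.some pc.2) with hΦ
  set A := ((Lset (k-1)) ×ˢ (Finset.univ : Finset α)).image Φ with hA
  have hΦinj : Function.Injective Φ := by
    rintro ⟨p₁, c₁⟩ ⟨p₂, c₂⟩ h
    simp only [hΦ, Prod.mk.injEq] at h
    obtain ⟨h1, h2⟩ := h
    exact Prod.ext ((List.map_injective_iff.mpr WithBot.coe_injective) h1)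
      (WithBot.coe_injective h2)
  have hAcard : A.card = σ ^ k := by
    rw [hA, Finset.card_image_of_injective _ hΦinj, Finset.card_product, hLsetcard,
      Finset.card_univ, hcard]
    rw [← pow_succ]
    congr 1
    omega
  -- every canonical pair appears in M
  have hAsub : A ⊆ M.toFinset := by
    intro pr hpr
    obtain ⟨⟨p, c2⟩, hpc, hΦpc⟩ := Finset.mem_image.mp hpr
    have hp : p ∈ Lset (k-1) := (Finset.mem_product.mp hpc).1
    have hplen : p.length = k - 1 := by
      obtain ⟨f, -, hf⟩ := Finset.mem_image.mp hp
      rw [← hf, List.length_ofFn]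
    -- find the window for c2 :: p
    obtain ⟨j, hj, hwin⟩ := window_exists k C hC c hkC hC0 (c2 :: p)
      (by simp [hplen]; omega)
    rw [← hwlin] at hwin
    have hjm : j < m := by omega
    set ρ := v.rotate (j+1) with hρ
    have hρmem : ρ ∈ R := hmemR' (j+1) (by omega)
    have hρeq : ρ = v.drop (j+1) ++ v.take (j+1) :=
      List.rotate_eq_drop_append_take (by omega)
    -- key of ρ
    have hkeyρ : key ρ = p.map WithBot.some := by
      rw [hkey]
      simp only
      rw [hρeq, List.take_append_of_le_length (by rw [List.length_drop]; omega)]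
      have hdropv : v.drop (j+1) = w''.drop (j+1) ++ [⊥] := by
        rw [hv, List.drop_append_of_le_length (by omega)]
      rw [hdropv, List.take_append_of_le_length (by rw [List.length_drop]; omega)]
      have : (w''.drop (j+1)).take (k-1) = ((wlin.drop (j+1)).take (k-1)).map WithBot.some := by
        rw [hw'', ← List.map_drop, ← List.map_take]
      rw [this]
      congr 1
      have h1 : (wlin.drop (j+1)).take (k-1) = ((wlin.drop j).take k).drop 1 := by
        rw [List.drop_take, List.drop_drop]
      rw [h1, hwin]
      simp
    -- val of ρ
    have hvalρ : val ρ = WithBot.some c2 := by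
      rw [hval]
      simp only
      have hρlen : ρ.length = N := by rw [hρ, List.length_rotate]
      have hNpos : 0 < N := by omega
      have hjwl : j < wlin.length := by rw [hwlen]; omega
      have hc2 : wlin[j]? = some c2 := by
        have h0 : ((wlin.drop j).take k)[0]? = some c2 := by
          rw [hwin]; simp
        rw [List.getElem?_take, if_pos (by omega), List.getElem?_drop, Nat.add_zero] at h0
        exact h0
      have hmod : (N - 1 + (j+1)) % N = j := by
        have he : N - 1 + (j + 1) = N + j := by omega
        rw [he, Nat.add_mod_left]
        exact Nat.mod_eq_of_lt (by omega)
      have hjw : j < w''.length := by omega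
      have hstep : ρ.getLast? = some (WithBot.some c2) := by
        rw [List.getLast?_eq_getElem?, hρlen, hρ,
          List.getElem?_rotate (by rw [← hN]; omega), ← hN, hmod, hv,
          List.getElem?_append, if_pos hjw, hw'', List.getElem?_map, hc2]
        rfl
      rw [hstep]
      rfl
    rw [← hΦpc]
    apply List.mem_toFinset.mpr
    rw [hM]
    apply List.mem_map.mpr
    exact ⟨ρ, hρmem, by rw [hΦ, hkeyρ, hvalρ]⟩
  -- split keys into bot-free and bot-containing
  set Ke := K.toFinset.filter (fun q => ⊥ ∈ q) with hKe
  have hKtot : K.toFinset.card ≤ σ ^ (k-1) + Ke.card := by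
    have hsub : K.toFinset ⊆ ((Lset (k-1)).image (List.map WithBot.some)) ∪ Ke := by
      intro q hq
      by_cases hqbot : ⊥ ∈ q
      · exact Finset.mem_union_right _ (Finset.mem_filter.mpr ⟨hq, hqbot⟩)
      · refine Finset.mem_union_left _ ?_
        obtain ⟨ρ, hρ, hρq⟩ := List.mem_map.mp (List.mem_toFinset.mp hq)
        obtain ⟨u, hu⟩ := exists_uncoe hqbot
        have hql : q.length = k - 1 := by rw [← hρq]; exact hkeylen ρ hρ
        have hul : u.length = k - 1 := by
          have := congrArg List.length hu
          rw [hql, List.length_map] at this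
          omega
        exact Finset.mem_image.mpr ⟨u, hLsetmem _ u hul, hu.symm⟩
    calc K.toFinset.card ≤ (((Lset (k-1)).image (List.map WithBot.some)) ∪ Ke).card :=
          Finset.card_le_card hsub
      _ ≤ ((Lset (k-1)).image (List.map WithBot.some)).card + Ke.card :=
          Finset.card_union_le _ _
      _ ≤ σ ^ (k-1) + Ke.card := by
          have h1 : ((Lset (k-1)).image (List.map WithBot.some)).card ≤ (Lset (k-1)).card :=
            Finset.card_image_le
          have h2 := hLsetcard (k-1)
          omega
  have hKecard : Ke.card ≤ (M.toFinset \ A).card := by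
    have hsub : Ke ⊆ (M.toFinset \ A).image Prod.fst := by
      intro q hq
      obtain ⟨hqK, hqbot⟩ := Finset.mem_filter.mp hq
      rw [hKfst] at hqK
      obtain ⟨pr, hpr, hprq⟩ := List.mem_map.mp (List.mem_toFinset.mp hqK)
      refine Finset.mem_image.mpr ⟨pr, Finset.mem_sdiff.mpr ⟨List.mem_toFinset.mpr hpr, ?_⟩, hprq⟩
      intro hcon
      obtain ⟨⟨p, c2⟩, -, hΦpc⟩ := Finset.mem_image.mp (hA ▸ hcon)
      have : pr.1 = p.map WithBot.some := by rw [← hΦpc]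
      rw [hprq] at this
      rw [this] at hqbot
      exact (by
        intro hmem
        obtain ⟨a, -, ha⟩ := List.mem_map.mp hmem
        exact WithBot.coe_ne_bot ha : ⊥ ∉ p.map WithBot.some) hqbot
    calc Ke.card ≤ ((M.toFinset \ A).image Prod.fst).card := Finset.card_le_card hsub
      _ ≤ (M.toFinset \ A).card := Finset.card_image_le
  have hMsplit : (M.toFinset \ A).card + A.card = M.toFinset.card :=
    Finset.card_sdiff_add_card_eq_card hAsub
  -- put it all together
  rw [hfm]
  have e1 : (M.destutter (· ≠ ·)).length + 1 ≤
    K.toFinset.card + (V.destutter (· ≠ ·)).length := by omega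
  have e2 : M.toFinset.card + 1 ≤ K.toFinset.card + (V.destutter (· ≠ ·)).length := by omega
  have e3 : σ ^ k + Ke.card ≤ M.toFinset.card := by
    rw [← hMsplit, ← hAcard]
    omega
  have e4 : K.toFinset.card ≤ σ ^ (k-1) + Ke.card := hKtot
  have e5 : σ ^ (k-1) * (σ - 1) + σ ^ (k-1) = σ ^ k := by
    have h1 : σ ^ (k-1) * (σ - 1) + σ ^ (k-1) = σ ^ (k-1) * (σ - 1 + 1) := by
      rw [Nat.mul_succ]
    have h2 : σ - 1 + 1 = σ := by omega
    rw [h1, h2, ← pow_succ]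
    congr 1
    omega
  have hfinal : σ ^ (k-1) * (σ - 1) + 1 ≤ (V.destutter (· ≠ ·)).length := by omega
  exact hfinal


end Pieces

/-- for the linearization `w_lin` of (a rotation of) a σ-ary
de Bruijn sequence of order k ≥ 2 (σ ≥ 2), the ratio between χ(w_lin $) and
the number r of runs of `BWT(w_lin $)` satisfies
`χ/r ≤ (σ^k + 1)/(σ^{k-1}(σ − 1) + 1) < σ/(σ − 1)`; in particular, for
σ ≥ 3 the ratio never reaches 3/2. -/
theorem deBruijn_ratio {α : Type*} [Fintype α] [LinearOrder α]
    (σ : ℕ) (hσ : 2 ≤ σ) (hcard : Fintype.card α = σ)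
    (k : ℕ) (hk : 2 ≤ k)
    (C : List α) (hC : IsDeBruijn k C) (c : ℕ)
    (wlin : List α) (hw : wlin = linz k (C.rotate c)) :
    (chi wlin : ℝ) / (runsCount (bwtL (term wlin)) : ℝ) ≤
        ((σ : ℝ) ^ k + 1) / ((σ : ℝ) ^ (k - 1) * ((σ : ℝ) - 1) + 1) ∧
    ((σ : ℝ) ^ k + 1) / ((σ : ℝ) ^ (k - 1) * ((σ : ℝ) - 1) + 1) <
        (σ : ℝ) / ((σ : ℝ) - 1) ∧
    (3 ≤ σ →
      (chi wlin : ℝ) / (runsCount (bwtL (term wlin)) : ℝ) < 3 / 2) := by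
  subst hw
  obtain ⟨hC1, hC2⟩ := hC
  have hterm : term (linz k (C.rotate c))
      = (linz k (C.rotate c)).map WithBot.some ++ [⊥] := term_eq _
  have hchi : chi (linz k (C.rotate c)) ≤ σ ^ k + 1 := by
    unfold chi sre
    rw [hterm]
    exact sre_bound σ k hσ hcard hk C ⟨hC1, hC2⟩ c
  have hruns : σ ^ (k-1) * (σ - 1) + 1 ≤ runsCount (bwtL (term (linz k (C.rotate c)))) := by
    rw [hterm]
    unfold runsCount bwtL
    exact runs_bound σ k hσ hcard hk C ⟨hC1, hC2⟩ c
  set χn := chi (linz k (C.rotate c)) with hχn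
  set rn := runsCount (bwtL (term (linz k (C.rotate c)))) with hrn
  set Dn := σ ^ (k-1) * (σ - 1) + 1 with hDn
  have hσR : (2:ℝ) ≤ (σ:ℝ) := by exact_mod_cast hσ
  have hDcast : (Dn : ℝ) = (σ:ℝ) ^ (k-1) * ((σ:ℝ) - 1) + 1 := by
    rw [hDn]
    push_cast [Nat.cast_sub (by omega : 1 ≤ σ)]
    ring
  have hDpos : (0:ℝ) < (σ:ℝ) ^ (k-1) * ((σ:ℝ) - 1) + 1 := by
    have h1 : (0:ℝ) ≤ (σ:ℝ) ^ (k-1) := by positivity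
    nlinarith
  have hσ1pos : (0:ℝ) < (σ:ℝ) - 1 := by linarith
  have hrpos : (0:ℝ) < (rn : ℝ) := by
    have : 1 ≤ rn := le_trans (by omega) hruns
    exact_mod_cast Nat.lt_of_lt_of_le Nat.zero_lt_one this
  have hrD : ((σ:ℝ) ^ (k-1) * ((σ:ℝ) - 1) + 1) ≤ (rn : ℝ) := by
    rw [← hDcast]
    exact_mod_cast hruns
  have hχcast : (χn : ℝ) ≤ (σ:ℝ) ^ k + 1 := by
    have : (χn : ℝ) ≤ ((σ ^ k + 1 : ℕ) : ℝ) := by exact_mod_cast hchi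
    calc (χn:ℝ) ≤ ((σ ^ k + 1 : ℕ) : ℝ) := this
      _ = (σ:ℝ) ^ k + 1 := by push_cast; ring
  have hpow : (σ:ℝ) ^ k = (σ:ℝ) ^ (k-1) * (σ:ℝ) := by
    rw [← pow_succ]
    congr 1
    omega
  have part1 : (χn : ℝ) / (rn : ℝ) ≤
      ((σ:ℝ) ^ k + 1) / ((σ:ℝ) ^ (k-1) * ((σ:ℝ) - 1) + 1) := by
    apply div_le_div₀ (by positivity) hχcast hDpos hrD
  have part2 : ((σ:ℝ) ^ k + 1) / ((σ:ℝ) ^ (k-1) * ((σ:ℝ) - 1) + 1) <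
      (σ:ℝ) / ((σ:ℝ) - 1) := by
    rw [div_lt_div_iff₀ hDpos hσ1pos, hpow]
    nlinarith [hσ1pos]
  refine ⟨part1, part2, fun hσ3 => ?_⟩
  have hσ3R : (3:ℝ) ≤ (σ:ℝ) := by exact_mod_cast hσ3
  have part3 : (σ:ℝ) / ((σ:ℝ) - 1) ≤ 3 / 2 := by
    rw [div_le_div_iff₀ hσ1pos (by norm_num)]
    linarith
  calc (χn : ℝ) / (rn : ℝ) ≤ _ := part1
    _ < (σ:ℝ) / ((σ:ℝ) - 1) := part2
    _ ≤ 3 / 2 := part3
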